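/- Let A and B be closed subsets of a complete metric space X and let x̄ ∈ X. If there exist K > 0 and δ > 0 such that d(x, A ∩ B) ≤ K(d(x, A) + d(x, B)) for all x in the open ball B_δ(x̄), and moreover A ∩ B(x̄, δ/(4K+10)) ≠ ∅ and B ∩ B(x̄, δ/(4K+10)) ≠ ∅, then A and B have property (T) at x̄. -/

import Mathlib

open Metric Set
open scoped ENNReal

/-- Property (T) of closed sets `A`, `B` at a point `x0` with constants `δ > 0`, `M > 0`. -/
def PropT {X : Type*} [MetricSpace X] (A B : Set X) (x0 : X) (δ M : ℝ) : Prop :=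
  (A ∩ Metric.ball x0 (δ / (2 * (1 + 2 * M)))).Nonempty ∧
  (B ∩ Metric.ball x0 (δ / (2 * (1 + 2 * M)))).Nonempty ∧
  ∀ xA ∈ A ∩ Metric.closedBall x0 δ, ∀ xB ∈ B ∩ Metric.closedBall x0 δ, xA ≠ xB →
    ∃ θ > 0, ∃ xA' ∈ A, ∃ xB' ∈ B,
      dist xA xA' ≤ θ * M ∧ dist xB xB' ≤ θ * M ∧ dist xA' xB' ≤ dist xA xB - θ

theorem stmt2 {X : Type*} [MetricSpace X] [CompleteSpace X]
    {A B : Set X} (hA : IsClosed A) (hB : IsClosed B) (xbar : X)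
    {K δ : ℝ} (hK : 0 < K) (hδ : 0 < δ)
    (hineq : ∀ x ∈ Metric.ball xbar δ,
      EMetric.infEdist x (A ∩ B) ≤
        ENNReal.ofReal K * (EMetric.infEdist x A + EMetric.infEdist x B))
    (hAne : (A ∩ Metric.ball xbar (δ / (4 * K + 10))).Nonempty)
    (hBne : (B ∩ Metric.ball xbar (δ / (4 * K + 10))).Nonempty) :
    ∃ δ' > 0, ∃ M > 0, PropT A B xbar δ' M := by
  set δ' : ℝ := δ * (4 * K + 8) / (4 * K + 10) with hδ'def
  set M : ℝ := K + 3 / 2 with hMdef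
  have hδ'pos : 0 < δ' := by positivity
  have hMpos : 0 < M := by positivity
  have hrad : δ' / (2 * (1 + 2 * M)) = δ / (4 * K + 10) := by
    rw [hδ'def, hMdef]
    have h1 : (4 : ℝ) * K + 10 ≠ 0 := by positivity
    field_simp
    ring
  have hδ'lt : δ' < δ := by
    rw [hδ'def, div_lt_iff₀ (by positivity)]
    nlinarith
  refine ⟨δ', hδ'pos, M, hMpos, ?_, ?_, ?_⟩
  · rw [hrad]; exact hAne
  · rw [hrad]; exact hBne
  · rintro xA ⟨hxA, hxAball⟩ xB ⟨hxB, hxBball⟩ hne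
    have hxAin : xA ∈ Metric.ball xbar δ := by
      rw [Metric.mem_closedBall] at hxAball
      rw [Metric.mem_ball]
      exact lt_of_le_of_lt hxAball hδ'lt
    set θ : ℝ := dist xA xB with hθdef
    have hθpos : 0 < θ := dist_pos.mpr hne
    have hE := hineq xA hxAin
    have hEA : EMetric.infEdist xA A = 0 := EMetric.infEdist_zero_of_mem hxA
    have hEB : EMetric.infEdist xA B ≤ edist xA xB :=
      EMetric.infEdist_le_edist_of_mem hxB
    have hE2 : EMetric.infEdist xA (A ∩ B) ≤ ENNReal.ofReal K * edist xA xB := by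
      calc EMetric.infEdist xA (A ∩ B)
          ≤ ENNReal.ofReal K * (EMetric.infEdist xA A + EMetric.infEdist xA B) := hE
        _ ≤ ENNReal.ofReal K * edist xA xB := by
            apply mul_le_mul_right
            rw [hEA, zero_add]
            exact hEB
    have hedist_ne0 : edist xA xB ≠ 0 := by
      simpa using (edist_pos.mpr hne).ne'
    have hedist_netop : edist xA xB ≠ ⊤ := edist_ne_top _ _
    have hlt : EMetric.infEdist xA (A ∩ B) <
        ENNReal.ofReal ((K + 1 / 4) * dist xA xB) := by
      refine lt_of_le_of_lt hE2 ?_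
      rw [ENNReal.ofReal_mul (by positivity), ← edist_dist]
      exact (ENNReal.mul_lt_mul_left hedist_ne0 hedist_netop)
        (ENNReal.ofReal_lt_ofReal_iff_of_nonneg hK.le |>.mpr (by linarith))
    obtain ⟨z, hz, hzlt⟩ := EMetric.infEdist_lt_iff.mp hlt
    have hdz : dist xA z < (K + 1 / 4) * θ := by
      rw [← hθdef] at hzlt
      exact edist_lt_ofReal.mp hzlt
    rw [hMdef]
    refine ⟨θ, hθpos, z, hz.1, z, hz.2, ?_, ?_, ?_⟩
    · nlinarith
    · have : dist xB z ≤ dist xB xA + dist xA z := dist_triangle _ _ _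
      rw [dist_comm xB xA, ← hθdef] at this
      nlinarith
    · simp [← hθdef]
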